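/- Let ε = ε(n) with 0 ≤ ε < 1/2 and ω(n) → ∞, and set t = ω(n)·n^{1−ε} with t = o(n) and m = ⌈(1−2ε)·log₂ n⌉. Then the probability that a uniformly random configuration of t pebbles on F_{m,n} is solvable tends to 1 as n → ∞. -/

import Mathlib

/-- A single pebbling step on a graph `G`: remove two pebbles from a vertex `u`
and place one pebble on a neighbor `v` of `u`. -/
def PebStep {V : Type*} [DecidableEq V] (G : SimpleGraph V) (C C' : V → ℕ) : Prop :=
  ∃ u v : V, G.Adj u v ∧ 2 ≤ C u ∧
    C' = fun w => if w = u then C u - 2 else if w = v then C w + 1 else C w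

/-- The fuse graph `F_{m,n}` on vertices `v_1, …, v_n` (0-indexed as `Fin n`):
a path `v_1 — v_2 — ⋯ — v_m` together with pendant vertices `v_{m+1}, …, v_n`
each adjacent to `v_m`. -/
def fuse (n m : ℕ) : SimpleGraph (Fin n) :=
  SimpleGraph.fromRel (fun i j =>
    (i.val + 1 = j.val ∧ j.val ≤ m - 1) ∨ (m ≤ j.val ∧ i.val = m - 1))


open Filter



open Finset Relation Real

lemma moveMany {V : Type*} [DecidableEq V] (G : SimpleGraph V) (u v : V) (h : G.Adj u v) :
    ∀ (k : ℕ) (C : V → ℕ), 2*k ≤ C u → ∃ C', ReflTransGen (PebStep G) C C' ∧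
      C v + k ≤ C' v ∧ ∀ w, w ≠ u → w ≠ v → C' w = C w := by
  intro k
  induction k with
  | zero => intro C _; exact ⟨C, .refl, by simp, fun _ _ _ => rfl⟩
  | succ k ih =>
    intro C hC
    set C₁ : V → ℕ := fun w => if w = u then C u - 2 else if w = v then C w + 1 else C w with hC₁
    have h2 : 2 ≤ C u := by omega
    have hstep : PebStep G C C₁ := ⟨u, v, h, h2, rfl⟩
    have hu : C₁ u = C u - 2 := by simp [hC₁]
    have hv : C₁ v = C v + 1 := by simp [hC₁, h.ne']
    obtain ⟨C', hR, hv', ho⟩ := ih C₁ (by omega)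
    refine ⟨C', .head hstep hR, by omega, fun w hw1 hw2 => ?_⟩
    rw [ho w hw1 hw2, hC₁]; simp [hw1, hw2]

lemma gather {V : Type*} [DecidableEq V] (G : SimpleGraph V) (c : V) :
    ∀ (S : Finset V), (∀ v ∈ S, G.Adj v c) → c ∉ S →
    ∀ (C : V → ℕ), (∀ v ∈ S, 2 ≤ C v) → ∃ C', ReflTransGen (PebStep G) C C' ∧
      C c + S.card ≤ C' c := by
  intro S
  induction S using Finset.induction with
  | empty => intro _ _ C _; exact ⟨C, .refl, by simp⟩
  | @insert a S ha ih =>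
    intro hadj hc C hC
    obtain ⟨C₁, hR₁, hv₁, ho₁⟩ := moveMany G a c (hadj a (by simp)) 1 C
      (by simpa using hC a (by simp))
    have hca : c ≠ a := fun h => hc (h ▸ by simp)
    obtain ⟨C', hR₂, hv₂⟩ := ih (fun v hv => hadj v (by simp [hv])) (fun h => hc (by simp [h])) C₁
      (fun v hv => by
        rw [ho₁ v (fun h => ha (h ▸ hv)) (fun h => hc (h ▸ by simp [hv]))]
        exact hC v (by simp [hv]))
    refine ⟨C', hR₁.trans hR₂, ?_⟩
    rw [Finset.card_insert_of_notMem ha]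
    omega

lemma fuse_adj_path (n m : ℕ) (i : ℕ) (hi1 : 1 ≤ i) (him : i ≤ m - 1) (hin : i < n) :
    (fuse n m).Adj ⟨i, hin⟩ ⟨i - 1, by omega⟩ := by
  simp only [fuse, SimpleGraph.fromRel_adj]
  constructor
  · intro h; have := congrArg Fin.val h; simp at this; omega
  · right; left; exact ⟨by omega, him⟩

lemma fuse_adj_pendant (n m : ℕ) (hm : 1 ≤ m) (j : Fin n) (hj : m ≤ j.val) (hmn : m - 1 < n) :
    (fuse n m).Adj ⟨m - 1, hmn⟩ j := by
  simp only [fuse, SimpleGraph.fromRel_adj]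
  constructor
  · intro h; have := congrArg Fin.val h; simp at this; omega
  · left; right
    exact ⟨hj, trivial⟩

lemma transport (n m : ℕ) (hmn : m ≤ n) :
    ∀ (d i : ℕ) (hi : i < m) (hd : d ≤ i) (C : Fin n → ℕ),
      2^d ≤ C ⟨i, lt_of_lt_of_le hi hmn⟩ →
      ∃ C', ReflTransGen (PebStep (fuse n m)) C C' ∧ 1 ≤ C' ⟨i - d, by omega⟩ := by
  intro d
  induction d with
  | zero => intro i hi _ C hC; exact ⟨C, .refl, by simpa using hC⟩
  | succ d ih =>
    intro i hi hd C hC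
    have hi1 : 1 ≤ i := by omega
    have hadj := fuse_adj_path n m i hi1 (by omega) (by omega)
    obtain ⟨C₁, hR₁, hv₁, _⟩ := moveMany _ _ _ hadj (2^d) C (by
      calc 2 * 2^d = 2^(d+1) := by ring
      _ ≤ _ := hC)
    obtain ⟨C', hR₂, hv₂⟩ := ih (i-1) (by omega) (by omega) C₁ (by omega)
    have : i - 1 - d = i - (d+1) := by omega
    refine ⟨C', hR₁.trans hR₂, ?_⟩
    convert hv₂ using 3
    omega

lemma solvable_of_heavy (n m : ℕ) (hm : 1 ≤ m) (hmn : m < n) (C : Fin n → ℕ)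
    (hK : 2^(m-1) + 1 ≤ (univ.filter (fun v : Fin n => m ≤ v.val ∧ 2 ≤ C v)).card) :
    ∀ r : Fin n, ∃ C', ReflTransGen (PebStep (fuse n m)) C C' ∧ 1 ≤ C' r := by
  intro r
  by_cases hr : 1 ≤ C r
  · exact ⟨C, .refl, hr⟩
  set S := univ.filter (fun v : Fin n => m ≤ v.val ∧ 2 ≤ C v) with hS
  have hmn' : m - 1 < n := by omega
  set c : Fin n := ⟨m - 1, hmn'⟩ with hc
  have hadj : ∀ v ∈ S, (fuse n m).Adj v c := by
    intro v hv
    simp only [hS, Finset.mem_filter] at hv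
    exact (fuse_adj_pendant n m hm v hv.2.1 hmn').symm
  have hcS : c ∉ S := by
    simp only [hS, Finset.mem_filter, hc]
    push_neg
    intro _ h
    omega
  obtain ⟨C₁, hR₁, hv₁⟩ := gather (fuse n m) c S hadj hcS C (by
    intro v hv; simp only [hS, Finset.mem_filter] at hv; exact hv.2.2)
  have hC₁c : 2^(m-1) + 1 ≤ C₁ c := le_trans (by omega) hv₁
  by_cases hrm : m ≤ r.val
  · -- pendant target
    have hadjr : (fuse n m).Adj c r := fuse_adj_pendant n m hm r hrm hmn'
    set C₂ : Fin n → ℕ := fun w => if w = c then C₁ c - 2 else if w = r then C₁ w + 1 else C₁ w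
    have hstep : PebStep (fuse n m) C₁ C₂ := ⟨c, r, hadjr, by have := Nat.one_le_two_pow (n := m-1); omega, rfl⟩
    refine ⟨C₂, hR₁.tail hstep, ?_⟩
    have : r ≠ c := hadjr.ne'
    simp [C₂, this]
  · -- path target
    have hrm' : r.val < m := by omega
    have hd : m - 1 - r.val ≤ m - 1 := by omega
    have h2 : 2^(m - 1 - r.val) ≤ C₁ c := by
      have : 2^(m-1-r.val) ≤ 2^(m-1) := Nat.pow_le_pow_right (by norm_num) (by omega)
      omega
    obtain ⟨C', hR₂, hv₂⟩ := transport n m (le_of_lt hmn) (m - 1 - r.val) (m-1) (by omega) hd C₁ h2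
    refine ⟨C', hR₁.trans hR₂, ?_⟩
    convert hv₂ using 3
    omega


lemma both_heavy_iff {n : ℕ} (v w : Fin n) (hvw : v ≠ w) (X : Multiset (Fin n)) :
    Multiset.replicate 2 v + Multiset.replicate 2 w ≤ X ↔
      2 ≤ Multiset.count v X ∧ 2 ≤ Multiset.count w X := by
  rw [Multiset.le_iff_count]
  constructor
  · intro h
    constructor
    · have := h v
      simp only [Multiset.count_add, Multiset.count_replicate, if_true,
        if_neg (Ne.symm hvw)] at this
      omega
    · have := h w
      simp only [Multiset.count_add, Multiset.count_replicate, if_true,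
        if_neg hvw] at this
      omega
  · rintro ⟨h1, h2⟩ a
    simp only [Multiset.count_add, Multiset.count_replicate]
    by_cases hav : v = a
    · subst hav; rw [if_pos rfl, if_neg (Ne.symm hvw)]; omega
    · by_cases haw : w = a
      · subst haw; rw [if_pos rfl, if_neg hvw]; omega
      · rw [if_neg hav, if_neg haw]; simp

lemma card_sym_sub (n t k : ℕ) (s : Multiset (Fin n)) (hs : Multiset.card s = k) (hk : k ≤ t) :
    Fintype.card {C : Sym (Fin n) t // s ≤ ↑C} = (n + (t - k) - 1).choose (t - k) := by
  have e : {C : Sym (Fin n) t // s ≤ ↑C} ≃ Sym (Fin n) (t - k) :=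
    { toFun := fun C => ⟨((C : Sym (Fin n) t) : Multiset (Fin n)) - s, by
        rw [Multiset.card_sub C.2, Sym.card_coe, hs]⟩
      invFun := fun D => ⟨⟨(D : Multiset (Fin n)) + s, by
        rw [Multiset.card_add, Sym.card_coe, hs]; omega⟩,
        Multiset.le_add_left _ _⟩
      left_inv := fun C => Subtype.ext (Subtype.ext (tsub_add_cancel_of_le C.2))
      right_inv := fun D => Subtype.ext (add_tsub_cancel_right _ _) }
  rw [Fintype.card_congr e, Sym.card_sym_eq_multichoose, Nat.multichoose_eq, Fintype.card_fin]

lemma card_heavy1 (n t : ℕ) (ht : 2 ≤ t) (v : Fin n) :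
    (univ.filter fun C : Sym (Fin n) t => 2 ≤ Multiset.count v ↑C).card
      = (n + (t - 2) - 1).choose (t - 2) := by
  rw [← card_sym_sub n t 2 (Multiset.replicate 2 v) (by simp) ht, Fintype.card_subtype]
  congr 1
  apply Finset.filter_congr
  intro C _
  exact @Multiset.le_count_iff_replicate_le (Fin n) _ v (↑C) 2

lemma card_heavy2 (n t : ℕ) (ht : 4 ≤ t) (v w : Fin n) (hvw : v ≠ w) :
    (univ.filter fun C : Sym (Fin n) t =>
        2 ≤ Multiset.count v ↑C ∧ 2 ≤ Multiset.count w ↑C).card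
      = (n + (t - 4) - 1).choose (t - 4) := by
  rw [← card_sym_sub n t 4 (Multiset.replicate 2 v + Multiset.replicate 2 w) (by simp) ht,
    Fintype.card_subtype]
  congr 1
  apply Finset.filter_congr
  intro C _
  exact (both_heavy_iff v w hvw _).symm

section sums
variable (n t mm : ℕ)

def Kf (C : Sym (Fin n) t) : ℕ :=
  (univ.filter (fun v : Fin n => mm ≤ v.val ∧ 2 ≤ Multiset.count v (C : Multiset (Fin n)))).card

lemma Kf_eq (C : Sym (Fin n) t) :
    Kf n t mm C = ∑ v ∈ univ.filter (fun v : Fin n => mm ≤ v.val),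
      (if 2 ≤ Multiset.count v (C : Multiset (Fin n)) then 1 else 0) := by
  rw [Kf, ← Finset.card_filter, Finset.filter_filter]

lemma sum_Kf (ht : 2 ≤ t) :
    ∑ C : Sym (Fin n) t, Kf n t mm C
      = (univ.filter (fun v : Fin n => mm ≤ v.val)).card * (n + (t - 2) - 1).choose (t - 2) := by
  simp_rw [Kf_eq]
  rw [Finset.sum_comm]
  have h : ∀ v ∈ univ.filter (fun v : Fin n => mm ≤ v.val),
      (∑ C : Sym (Fin n) t, if 2 ≤ Multiset.count v (C : Multiset (Fin n)) then 1 else 0)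
        = (n + (t - 2) - 1).choose (t - 2) := by
    intro v _
    rw [← Finset.card_filter, card_heavy1 n t ht v]
  rw [Finset.sum_congr rfl h, Finset.sum_const, smul_eq_mul]

lemma sum_Kf_sq (ht : 4 ≤ t) :
    ∑ C : Sym (Fin n) t, (Kf n t mm C)^2
      = (univ.filter (fun v : Fin n => mm ≤ v.val)).card * (n + (t - 2) - 1).choose (t - 2)
        + (univ.filter (fun v : Fin n => mm ≤ v.val)).card
          * (((univ.filter (fun v : Fin n => mm ≤ v.val)).card - 1)
          * (n + (t - 4) - 1).choose (t - 4)) := by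
  set P := univ.filter (fun v : Fin n => mm ≤ v.val) with hP
  have key : ∀ C : Sym (Fin n) t, (Kf n t mm C)^2 = ∑ v ∈ P, ∑ w ∈ P,
      (if 2 ≤ Multiset.count v (C : Multiset (Fin n)) ∧
          2 ≤ Multiset.count w (C : Multiset (Fin n)) then 1 else 0) := by
    intro C
    rw [Kf_eq, sq, Finset.sum_mul_sum]
    apply Finset.sum_congr rfl; intro v _
    apply Finset.sum_congr rfl; intro w _
    by_cases h1 : 2 ≤ Multiset.count v (C : Multiset (Fin n)) <;>
      by_cases h2 : 2 ≤ Multiset.count w (C : Multiset (Fin n)) <;> simp [h1, h2]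
  simp_rw [key]
  rw [Finset.sum_comm]
  have inner : ∀ v ∈ P, (∑ C : Sym (Fin n) t, ∑ w ∈ P,
      (if 2 ≤ Multiset.count v (C : Multiset (Fin n)) ∧
          2 ≤ Multiset.count w (C : Multiset (Fin n)) then 1 else 0))
      = (n + (t - 2) - 1).choose (t - 2) + (P.card - 1) * (n + (t - 4) - 1).choose (t - 4) := by
    intro v hv
    rw [Finset.sum_comm]
    rw [← Finset.sum_erase_add _ _ hv]
    have h1 : ∑ C : Sym (Fin n) t,
        (if 2 ≤ Multiset.count v (C : Multiset (Fin n)) ∧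
            2 ≤ Multiset.count v (C : Multiset (Fin n)) then 1 else 0)
        = (n + (t - 2) - 1).choose (t - 2) := by
      rw [← card_heavy1 n t (by omega) v, Finset.card_filter]
      apply Finset.sum_congr rfl
      intro C _
      simp only [and_self]
    have h2 : ∀ w ∈ P.erase v, (∑ C : Sym (Fin n) t,
        (if 2 ≤ Multiset.count v (C : Multiset (Fin n)) ∧
            2 ≤ Multiset.count w (C : Multiset (Fin n)) then 1 else 0))
        = (n + (t - 4) - 1).choose (t - 4) := by
      intro w hw
      rw [← card_heavy2 n t ht v w (Ne.symm (Finset.ne_of_mem_erase hw)), Finset.card_filter]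
    rw [Finset.sum_congr rfl h2, Finset.sum_const, Finset.card_erase_of_mem hv, h1, smul_eq_mul]
    exact Nat.add_comm _ _
  rw [Finset.sum_congr rfl inner, Finset.sum_const, smul_eq_mul]
  rw [Nat.mul_add]

end sums


-- generic square-deviation sum
lemma sum_sq_dev {α : Type*} [Fintype α] (f : α → ℕ) (μ : ℝ) :
    ∑ a : α, ((f a : ℝ) - μ)^2
      = ∑ a : α, ((f a : ℝ))^2 - 2*μ*(∑ a : α, (f a : ℝ)) + (Fintype.card α) * μ^2 := by
  have h : ∀ a ∈ (univ : Finset α), ((f a : ℝ) - μ)^2 = (f a : ℝ)^2 - 2*μ*(f a : ℝ) + μ^2 :=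
    fun a _ => by ring
  rw [Finset.sum_congr rfl h, Finset.sum_add_distrib, Finset.sum_sub_distrib,
    ← Finset.mul_sum, Finset.sum_const, nsmul_eq_mul, Finset.card_univ]

lemma bad_sq {α : Type*} [Fintype α] (f : α → ℕ) (N : ℕ) (μ : ℝ) (hN : (N:ℝ) ≤ μ/2) :
    ((univ.filter fun a => f a < N).card : ℝ) * (μ/2)^2 ≤ ∑ a : α, ((f a : ℝ) - μ)^2 := by
  have h1 : ((univ.filter fun a => f a < N).card : ℝ) * (μ/2)^2
      = ∑ _a ∈ univ.filter fun a => f a < N, (μ/2)^2 := by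
    rw [Finset.sum_const, nsmul_eq_mul]
  rw [h1]
  have h2 : ∑ a ∈ univ.filter (fun a => f a < N), (μ/2)^2
      ≤ ∑ a ∈ univ.filter (fun a => f a < N), ((f a : ℝ) - μ)^2 := by
    apply Finset.sum_le_sum
    intro a ha
    have hfa : (f a : ℝ) < N := by
      exact_mod_cast (Finset.mem_filter.mp ha).2
    have hN0 : (0:ℝ) ≤ N := Nat.cast_nonneg N
    nlinarith
  exact h2.trans (Finset.sum_le_sum_of_subset_of_nonneg (Finset.filter_subset _ _)
    (fun a _ _ => sq_nonneg _))

lemma two_step (x k : ℕ) :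
    (x+1)*(x+2)* x.choose k = (k+1)*(k+2)*((x+2).choose (k+2)) := by
  have h1 : (x+1) * x.choose k = (x+1).choose (k+1) * (k+1) := Nat.add_one_mul_choose_eq x k
  have h2 : (x+2) * (x+1).choose (k+1) = (x+2).choose (k+2) * (k+2) := by
    simpa using Nat.add_one_mul_choose_eq (x+1) (k+1)
  calc (x+1)*(x+2)* x.choose k = (x+2)*((x+1)*x.choose k) := by ring
    _ = (x+2)*((x+1).choose (k+1)*(k+1)) := by rw [h1]
    _ = (k+1)*((x+2)*(x+1).choose (k+1)) := by ring
    _ = (k+1)*((x+2).choose (k+2)*(k+2)) := by rw [h2]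
    _ = (k+1)*(k+2)*((x+2).choose (k+2)) := by ring

lemma card_pendants (n mm : ℕ) (h : mm < n) :
    (univ.filter fun v : Fin n => mm ≤ v.val).card = n - mm := by
  have : (univ.filter fun v : Fin n => mm ≤ v.val) = Finset.Ici (⟨mm, h⟩ : Fin n) := by
    ext v
    simp [Fin.le_def]
  rw [this, Fin.card_Ici]

lemma card_sym_all (n t : ℕ) :
    Fintype.card (Sym (Fin n) t) = (n + t - 1).choose t := by
  rw [Sym.card_sym_eq_multichoose, Nat.multichoose_eq, Fintype.card_fin]


section arith

lemma arith_mu (n t Q a1 O μ : ℝ) (hn : 64 ≤ n) (ht : 4 ≤ t) (htn : t ≤ n)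
    (hQn2 : n ≤ 2*Q) (hQlen : Q ≤ n)
    (hO : 0 < O) (ha1 : 0 < a1)
    (hI1 : (n+t-2)*(n+t-1)*a1 = (t-1)*t*O)
    (hμO : μ * O = Q * a1) : t^2 ≤ 16*n*μ := by
  have hD2 : (0:ℝ) < (n+t-2) := by linarith
  have hD1 : (0:ℝ) < (n+t-1) := by linarith
  have hμeq : μ * ((n+t-2)*(n+t-1)) = Q*((t-1)*t) := by
    have h3 : μ * ((n+t-2)*(n+t-1)) * O = Q*((t-1)*t) * O := by
      calc μ * ((n+t-2)*(n+t-1)) * O = (μ * O) * ((n+t-2)*(n+t-1)) := by ring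
        _ = (Q * a1) * ((n+t-2)*(n+t-1)) := by rw [hμO]
        _ = Q * ((n+t-2)*(n+t-1)*a1) := by ring
        _ = Q * ((t-1)*t*O) := by rw [hI1]
        _ = Q*((t-1)*t) * O := by ring
    exact mul_right_cancel₀ hO.ne' h3
  have h4 : t^2 * ((n+t-2)*(n+t-1)) ≤ 16*n*(Q*((t-1)*t)) := by
    have p1 : (n+t-2)*(n+t-1) ≤ 4*n^2 := by nlinarith
    have q2 : 3*t ≤ 4*(t-1) := by linarith
    have r1 : n*(3*t) ≤ (2*Q)*(4*(t-1)) := mul_le_mul hQn2 q2 (by linarith) (by linarith)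
    have r2 : (n*(3*t))*t ≤ ((2*Q)*(4*(t-1)))*t := mul_le_mul_of_nonneg_right r1 (by linarith)
    have r3 : (2*n)*((n*(3*t))*t) ≤ (2*n)*(((2*Q)*(4*(t-1)))*t) :=
      mul_le_mul_of_nonneg_left r2 (by linarith)
    nlinarith [mul_le_mul_of_nonneg_left p1 (sq_nonneg t), r3, sq_nonneg (n*t)]
  have h6 : t^2 * ((n+t-2)*(n+t-1)) ≤ 16*n*μ * ((n+t-2)*(n+t-1)) := by
    calc t^2 * ((n+t-2)*(n+t-1)) ≤ 16*n*(Q*((t-1)*t)) := h4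
      _ = 16*n*(μ * ((n+t-2)*(n+t-1))) := by rw [hμeq]
      _ = 16*n*μ * ((n+t-2)*(n+t-1)) := by ring
  exact le_of_mul_le_mul_right h6 (mul_pos hD2 hD1)

lemma arith_N (n t Q a1 O μ : ℝ) (hn : 64 ≤ n) (ht : 4 ≤ t) (htn : t ≤ n)
    (hQn2 : n ≤ 2*Q) (hQlen : Q ≤ n)
    (hO : 0 < O) (ha1 : 0 < a1)
    (hI1 : (n+t-2)*(n+t-1)*a1 = (t-1)*t*O)
    (hμO : μ * O = Q * a1) (x : ℝ) (hx : x ≤ t^2/(32*n)) : x ≤ μ/2 := by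
  have h := arith_mu n t Q a1 O μ hn ht htn hQn2 hQlen hO ha1 hI1 hμO
  refine hx.trans ?_
  rw [div_le_div_iff₀ (by linarith) (by norm_num)]
  linarith only [h]


lemma mu_pos (n t μ : ℝ) (hn : 64 ≤ n) (ht : 4 ≤ t) (h : t^2 ≤ 16*n*μ) : 0 < μ := by
  nlinarith

lemma poly_hs (n t : ℝ) (hn : 64 ≤ n) (ht : 4 ≤ t) (htn : t ≤ n) :
    n*(((t-3)*(t-2))*((n+t-2)*(n+t-1))) ≤ (n+16)*(((n+t-4)*(n+t-3))*((t-1)*t)) := by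
  have u1 : (t-3)*(t-2) ≤ (t-1)*t := by nlinarith
  have v2 : (0:ℝ) ≤ n*((n+t-2)*(n+t-1)) := by
    have : (0:ℝ) < (n+t-2)*(n+t-1) := mul_pos (by linarith) (by linarith)
    nlinarith
  have v1 : (0:ℝ) ≤ (t-1)*t := by nlinarith
  have u2 : n*((n+t-2)*(n+t-1)) ≤ (n+16)*((n+t-4)*(n+t-3)) := by
    have w1 : n ≤ n+t-4 := by linarith
    have w2 : (0:ℝ) ≤ 4*(n+t)-10 := by linarith
    have w3 := mul_le_mul_of_nonneg_right w1 w2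
    have w4 : (0:ℝ) ≤ (n+t-4)*(12*(n+t)-38) :=
      mul_nonneg (by linarith) (by linarith)
    nlinarith [w3, w4]
  calc n*(((t-3)*(t-2))*((n+t-2)*(n+t-1)))
      = ((t-3)*(t-2))*(n*((n+t-2)*(n+t-1))) := by ring
    _ ≤ ((t-1)*t)*(n*((n+t-2)*(n+t-1))) := mul_le_mul_of_nonneg_right u1 v2
    _ ≤ ((t-1)*t)*((n+16)*((n+t-4)*(n+t-3))) := mul_le_mul_of_nonneg_left u2 v1
    _ = (n+16)*(((n+t-4)*(n+t-3))*((t-1)*t)) := by ring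

lemma poly_c5 (n t O μ : ℝ) (hn : 64 ≤ n) (ht : 4 ≤ t) (hO : 0 < O) (hμ : 0 < μ)
    (hlow : t^2 ≤ 16*n*μ) :
    (n*O*μ + 16*(O*μ^2))*(4*t^2) ≤ (O*(64*n^2 + 64*t^2)) * μ^2 := by
  nlinarith [mul_le_mul_of_nonneg_right hlow
    (le_of_lt (show (0:ℝ) < 4*n*O*μ by
      have := mul_pos (mul_pos (show (0:ℝ) < 4*n by linarith) hO) hμ
      linarith))]

lemma arith_all (n t Q a1 a2 O μ Bad V : ℝ) (hn : 64 ≤ n) (ht : 4 ≤ t) (htn : t ≤ n)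
    (hQ32 : 32 ≤ Q) (hQn2 : n ≤ 2*Q) (hQlen : Q ≤ n)
    (hO : 0 < O) (ha1 : 0 < a1) (ha2 : 0 ≤ a2) (hBad : 0 ≤ Bad)
    (hI1 : (n+t-2)*(n+t-1)*a1 = (t-1)*t*O)
    (hI2 : (n+t-4)*(n+t-3)*a2 = (t-3)*(t-2)*a1)
    (hμO : μ * O = Q * a1)
    (hV : V = Q*a1 + Q*((Q-1)*a2) - 2*μ*(Q*a1) + O*μ^2)
    (hbs : Bad * (μ/2)^2 ≤ V) :
    Bad * (t^2*n) ≤ O*(64*n^2 + 64*t^2) := by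
  have hμ_low : t^2 ≤ 16*n*μ := arith_mu n t Q a1 O μ hn ht htn hQn2 hQlen hO ha1 hI1 hμO
  have hμpos : 0 < μ := mu_pos n t μ hn ht hμ_low
  have key3 : n*(a2*O) ≤ (n+16)*a1^2 := by
    have hs4 : (0:ℝ) < (n+t-4) := by linarith
    have hs3 : (0:ℝ) < (n+t-3) := by linarith
    have E : ((n+t-4)*(n+t-3))*((t-1)*t)*(a2*O)
        = ((t-3)*(t-2))*((n+t-2)*(n+t-1))*a1^2 := by
      calc ((n+t-4)*(n+t-3))*((t-1)*t)*(a2*O)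
          = ((n+t-4)*(n+t-3)*a2)*((t-1)*t*O) := by ring
        _ = ((t-3)*(t-2)*a1)*((n+t-2)*(n+t-1)*a1) := by rw [hI2, ← hI1]
        _ = ((t-3)*(t-2))*((n+t-2)*(n+t-1))*a1^2 := by ring
    have hs : n*(((t-3)*(t-2))*((n+t-2)*(n+t-1)))
        ≤ (n+16)*(((n+t-4)*(n+t-3))*((t-1)*t)) := poly_hs n t hn ht htn
    have h7 : n*(a2*O) * (((n+t-4)*(n+t-3))*((t-1)*t))
        ≤ (n+16)*a1^2 * (((n+t-4)*(n+t-3))*((t-1)*t)) := by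
      calc n*(a2*O) * (((n+t-4)*(n+t-3))*((t-1)*t))
          = n*(((n+t-4)*(n+t-3))*((t-1)*t)*(a2*O)) := by ring
        _ = n*(((t-3)*(t-2))*((n+t-2)*(n+t-1))*a1^2) := by rw [E]
        _ = (n*(((t-3)*(t-2))*((n+t-2)*(n+t-1))))*a1^2 := by ring
        _ ≤ ((n+16)*(((n+t-4)*(n+t-3))*((t-1)*t)))*a1^2 :=
            mul_le_mul_of_nonneg_right hs (sq_nonneg _)
        _ = (n+16)*a1^2 * (((n+t-4)*(n+t-3))*((t-1)*t)) := by ring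
    refine le_of_mul_le_mul_right h7 ?_
    have h8 : (0:ℝ) < t-1 := by linarith
    positivity
  have h11 : n*(Q*((Q-1)*a2))*O ≤ (n+16)*(Q*a1)^2 := by
    have w : (0:ℝ) ≤ n*Q*a2*O :=
      mul_nonneg (mul_nonneg (mul_nonneg (by linarith) (by linarith)) ha2) hO.le
    calc n*(Q*((Q-1)*a2))*O ≤ n*(Q*(Q*a2))*O := by linarith only [w]
      _ = Q^2*(n*(a2*O)) := by ring
      _ ≤ Q^2*((n+16)*a1^2) := mul_le_mul_of_nonneg_left key3 (sq_nonneg Q)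
      _ = (n+16)*(Q*a1)^2 := by ring
  have h12 : n*(Q*((Q-1)*a2)) ≤ (n+16)*(O*μ^2) := by
    refine le_of_mul_le_mul_right ?_ hO
    calc n*(Q*((Q-1)*a2))*O ≤ (n+16)*(Q*a1)^2 := h11
      _ = (n+16)*(μ*O)^2 := by rw [hμO]
      _ = (n+16)*(O*μ^2)*O := by ring
  have hvar : n * V ≤ n*O*μ + 16*(O*μ^2) := by
    have expand : n * V = n*(μ*O) + n*(Q*((Q-1)*a2)) - n*(O*μ^2) := by
      rw [hV, ← hμO]; ring
    rw [expand]
    linarith only [h12]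
  have main : (Bad * (t^2*n)) * μ^2 ≤ (O*(64*n^2 + 64*t^2)) * μ^2 := by
    have c2 : Bad*(μ/2)^2*(4*t^2*n) ≤ V*(4*t^2*n) :=
      mul_le_mul_of_nonneg_right hbs
        (mul_nonneg (mul_nonneg (by norm_num) (sq_nonneg t)) (by linarith))
    have c4 : (n*V)*(4*t^2) ≤ (n*O*μ + 16*(O*μ^2))*(4*t^2) :=
      mul_le_mul_of_nonneg_right hvar (by positivity)
    have c5 : (n*O*μ + 16*(O*μ^2))*(4*t^2) ≤ (O*(64*n^2 + 64*t^2)) * μ^2 :=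
      poly_c5 n t O μ hn ht hO hμpos hμ_low
    calc (Bad * (t^2*n)) * μ^2 = Bad*(μ/2)^2*(4*t^2*n) := by ring
      _ ≤ V*(4*t^2*n) := c2
      _ = (n*V)*(4*t^2) := by ring
      _ ≤ (n*O*μ + 16*(O*μ^2))*(4*t^2) := c4
      _ ≤ (O*(64*n^2 + 64*t^2)) * μ^2 := c5
  exact le_of_mul_le_mul_right main (pow_pos hμpos 2)

end arith

lemma core (n t mm : ℕ) (hn : 64 ≤ n) (ht4 : 4 ≤ t) (htn : t ≤ n) (hm1 : 1 ≤ mm)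
    (hm2 : 2*mm ≤ n)
    (hN : ((2:ℝ)^(mm-1) + 1) ≤ (t:ℝ)^2/(32*(n:ℝ))) :
    ((univ.filter fun C : Sym (Fin n) t => Kf n t mm C < 2^(mm-1)+1).card : ℝ)
        * ((t:ℝ)^2 * (n:ℝ))
      ≤ ((n + t - 1).choose t : ℝ) * (64*(n:ℝ)^2 + 64*(t:ℝ)^2) := by
  set A1 : ℕ := (n + (t-2) - 1).choose (t-2) with hA1
  set A2 : ℕ := (n + (t-4) - 1).choose (t-4) with hA2
  set Om : ℕ := (n + t - 1).choose t with hOm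
  set q : ℕ := (univ.filter fun v : Fin n => mm ≤ v.val).card with hqdef
  set Bad : ℕ := (univ.filter fun C : Sym (Fin n) t => Kf n t mm C < 2^(mm-1)+1).card
    with hBad
  clear_value A1 A2 Om q Bad
  have hq : q = n - mm := by rw [hqdef]; exact card_pendants n mm (by omega)
  -- choose identities (ℕ)
  have hI1n : (n+t-2)*(n+t-1)*A1 = (t-1)*t*Om := by
    rw [hA1, hOm]
    obtain ⟨b, rfl⟩ : ∃ b, t = b + 4 := ⟨t - 4, by omega⟩
    have e1 : n + (b+4-2) - 1 = n+b+1 := by omega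
    have e2 : b+4-2 = b+2 := by omega
    have e3 : n+(b+4)-2 = (n+b+1)+1 := by omega
    have e4 : n+(b+4)-1 = (n+b+1)+2 := by omega
    have e5 : n+b+1+2 = n+b+3 := by omega
    have e6 : b+4-1 = b+3 := by omega
    rw [e1, e2, e3, e4, e6]
    have h := two_step (n+b+1) (b+2)
    have e7 : (n+b+1)+2 = n+b+3 := by omega
    have e8 : (b+2)+2 = b+4 := by omega
    rw [e7, e8] at h
    rw [e5, h]
  have hI2n : (n+t-4)*(n+t-3)*A2 = (t-3)*(t-2)*A1 := by
    rw [hA1, hA2]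
    obtain ⟨b, rfl⟩ : ∃ b, t = b + 4 := ⟨t - 4, by omega⟩
    obtain ⟨c, rfl⟩ : ∃ c, n = c + 64 := ⟨n - 64, by omega⟩
    have e1 : c+64 + (b+4-4) - 1 = c+b+63 := by omega
    have e2 : b+4-4 = b := by omega
    have e3 : c+64+(b+4)-4 = (c+b+63)+1 := by omega
    have e4 : c+64+(b+4)-3 = (c+b+63)+2 := by omega
    have e5 : c+64+(b+4-2)-1 = (c+b+63)+2 := by omega
    have e6 : b+4-3 = b+1 := by omega
    have e7 : b+4-2 = b+2 := by omega
    rw [e1, e2, e3, e4, e5, e6, e7]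
    exact two_step (c+b+63) b
  have hOpos : 0 < Om := by rw [hOm]; exact Nat.choose_pos (by omega)
  have hA1pos : 0 < A1 := by rw [hA1]; exact Nat.choose_pos (by omega)
  have hq1 : 32 ≤ q := by omega
  set O : ℝ := (Om : ℝ) with hO
  set a1 : ℝ := (A1 : ℝ) with ha1
  set a2 : ℝ := (A2 : ℝ) with ha2
  set Q : ℝ := (q : ℝ) with hQ
  clear_value O a1 a2 Q
  have hOposR : (0:ℝ) < O := by rw [hO]; exact_mod_cast hOpos
  have ha1pos : (0:ℝ) < a1 := by rw [ha1]; exact_mod_cast hA1pos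
  have ha2nn : (0:ℝ) ≤ a2 := by rw [ha2]; exact Nat.cast_nonneg _
  have hQ32 : (32:ℝ) ≤ Q := by rw [hQ]; exact_mod_cast hq1
  have hQn2 : (n:ℝ) ≤ 2*Q := by
    have h : n ≤ 2*q := by omega
    rw [hQ]; exact_mod_cast h
  have hQlen : Q ≤ (n:ℝ) := by
    have h : q ≤ n := by omega
    rw [hQ]; exact_mod_cast h
  have hnR : (64:ℝ) ≤ (n:ℝ) := by exact_mod_cast hn
  have htR : (4:ℝ) ≤ (t:ℝ) := by exact_mod_cast ht4
  have htnR : (t:ℝ) ≤ (n:ℝ) := by exact_mod_cast htn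
  -- choose identities (ℝ)
  have hI1 : ((n:ℝ)+t-2)*((n:ℝ)+t-1)*a1 = ((t:ℝ)-1)*t*O := by
    have h2 : (((n+t-2)*(n+t-1)*A1 : ℕ) : ℝ) = (((t-1)*t*Om : ℕ) : ℝ) := by
      exact_mod_cast congrArg (Nat.cast (R := ℝ)) hI1n
    push_cast [Nat.cast_sub (by omega : 2 ≤ n+t), Nat.cast_sub (by omega : 1 ≤ n+t),
      Nat.cast_sub (by omega : 1 ≤ t)] at h2
    rw [ha1, hO]
    convert h2 using 1 <;> push_cast <;> ring
  have hI2 : ((n:ℝ)+t-4)*((n:ℝ)+t-3)*a2 = ((t:ℝ)-3)*((t:ℝ)-2)*a1 := by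
    have h2 : (((n+t-4)*(n+t-3)*A2 : ℕ) : ℝ) = (((t-3)*(t-2)*A1 : ℕ) : ℝ) := by
      exact_mod_cast congrArg (Nat.cast (R := ℝ)) hI2n
    push_cast [Nat.cast_sub (by omega : 4 ≤ n+t), Nat.cast_sub (by omega : 3 ≤ n+t),
      Nat.cast_sub (by omega : 3 ≤ t), Nat.cast_sub (by omega : 2 ≤ t)] at h2
    rw [ha1, ha2]
    convert h2 using 1 <;> push_cast <;> ring
  -- the mean
  set μ : ℝ := Q * a1 / O with hμ
  clear_value μ
  have hμO : μ * O = Q * a1 := by rw [hμ]; exact div_mul_cancel₀ _ hOposR.ne'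
  -- sums
  have hS1n : ∑ C : Sym (Fin n) t, Kf n t mm C = q * A1 := by
    rw [hqdef, hA1]; exact sum_Kf n t mm (by omega)
  have hS2n : ∑ C : Sym (Fin n) t, (Kf n t mm C)^2 = q * A1 + q * ((q-1) * A2) := by
    rw [hqdef, hA1, hA2]; exact sum_Kf_sq n t mm ht4
  have hS1 : ∑ C : Sym (Fin n) t, (Kf n t mm C : ℝ) = Q * a1 := by
    rw [← Nat.cast_sum, hS1n, Nat.cast_mul, hQ, ha1]
  have h9 : ((q - 1 : ℕ) : ℝ) = Q - 1 := by
    rw [hQ, Nat.cast_sub (by omega : 1 ≤ q), Nat.cast_one]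
  have hS2 : ∑ C : Sym (Fin n) t, ((Kf n t mm C : ℝ))^2 = Q * a1 + Q*((Q-1)*a2) := by
    have h8 : ∀ C ∈ (univ : Finset (Sym (Fin n) t)),
        ((Kf n t mm C : ℝ))^2 = (((Kf n t mm C)^2 : ℕ) : ℝ) := by
      intro C _; push_cast; ring
    rw [Finset.sum_congr rfl h8, ← Nat.cast_sum, hS2n]
    push_cast [h9, hQ, ha1, ha2]
    ring
  have hdev : ∑ C : Sym (Fin n) t, ((Kf n t mm C : ℝ) - μ)^2
      = Q*a1 + Q*((Q-1)*a2) - 2*μ*(Q*a1) + O*μ^2 := by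
    rw [sum_sq_dev (Kf n t mm) μ, hS1, hS2, card_sym_all, ← hOm, ← hO]
  -- Chebyshev
  have hNc : (((2^(mm-1)+1 : ℕ)):ℝ) ≤ μ/2 := by
    have hc : (((2^(mm-1)+1 : ℕ)):ℝ) = (2:ℝ)^(mm-1) + 1 := by push_cast; ring
    rw [hc]
    exact arith_N (n:ℝ) (t:ℝ) Q a1 O μ hnR htR htnR hQn2 hQlen hOposR ha1pos hI1 hμO _ hN
  have hbs : (Bad : ℝ) * (μ/2)^2
      ≤ Q*a1 + Q*((Q-1)*a2) - 2*μ*(Q*a1) + O*μ^2 := by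
    rw [← hdev, hBad]
    exact bad_sq (Kf n t mm) (2^(mm-1)+1) μ hNc
  exact arith_all (n:ℝ) (t:ℝ) Q a1 a2 O μ (Bad:ℝ) _ hnR htR htnR hQ32 hQn2 hQlen
    hOposR ha1pos ha2nn (Nat.cast_nonneg _) hI1 hI2 hμO rfl hbs


lemma eventual_facts (n tn mn : ℕ) (εn ωn : ℝ) (hε0 : 0 ≤ εn) (hε2 : εn < 1/2)
    (hω8 : 8 ≤ ωn)
    (htn : (tn:ℝ) = ωn * (n:ℝ)^(1-εn)) (hmn : mn = ⌈(1-2*εn)*Real.logb 2 n⌉₊)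
    (h64 : 64 ≤ n) :
    4 ≤ tn ∧ 1 ≤ mn ∧ 2*mn ≤ n ∧ ((2:ℝ)^(mn-1) + 1 ≤ (tn:ℝ)^2/(32*(n:ℝ)))
      ∧ (ωn^2*(n:ℝ) ≤ (tn:ℝ)^2) := by
  have hnR : (64:ℝ) ≤ (n:ℝ) := by exact_mod_cast h64
  have hn1 : (1:ℝ) ≤ (n:ℝ) := by linarith
  have hnp : (0:ℝ) < (n:ℝ) := by linarith
  set A : ℝ := (n:ℝ)^(1-εn) with hA
  have hA1 : 1 ≤ A := by
    rw [hA]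
    calc (1:ℝ) = (n:ℝ)^(0:ℝ) := by rw [Real.rpow_zero]
      _ ≤ (n:ℝ)^(1-εn) := Real.rpow_le_rpow_of_exponent_le hn1 (by linarith)
  have ht4 : 4 ≤ tn := by
    have : (4:ℝ) ≤ (tn:ℝ) := by
      rw [htn]; nlinarith
    exact_mod_cast this
  -- m ≥ 1
  have hx0 : 0 < (1-2*εn)*Real.logb 2 n := by
    have h1 : (0:ℝ) < 1-2*εn := by linarith
    have h2 : 0 < Real.logb 2 n := Real.logb_pos (by norm_num) (by linarith)
    exact mul_pos h1 h2
  have hm1 : 1 ≤ mn := by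
    rw [hmn]; exact Nat.ceil_pos.mpr hx0
  -- m bound
  have hceil : (mn:ℝ) < (1-2*εn)*Real.logb 2 n + 1 := by
    rw [hmn]; exact Nat.ceil_lt_add_one hx0.le
  have hlogb : Real.logb 2 n ≤ 3*Real.sqrt n := by
    have hs0 : (0:ℝ) < Real.sqrt n := Real.sqrt_pos.mpr hnp
    have hlog : Real.log n ≤ 2*Real.sqrt n := by
      have h1 : Real.log (Real.sqrt n) = Real.log n / 2 := Real.log_sqrt hnp.le
      have h2 : Real.log (Real.sqrt n) ≤ Real.sqrt n - 1 := Real.log_le_sub_one_of_pos hs0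
      linarith
    have hlog2 : (2/3 : ℝ) ≤ Real.log 2 := by
      have := Real.log_two_gt_d9
      linarith
    rw [← Real.log_div_log]
    calc Real.log n / Real.log 2 ≤ (2*Real.sqrt n) / (2/3) :=
        div_le_div₀ (by positivity) hlog (by norm_num) hlog2
      _ = 3*Real.sqrt n := by ring
  have hsqrt8 : (8:ℝ) ≤ Real.sqrt n := by
    rw [show (8:ℝ) = Real.sqrt 64 by
      rw [show (64:ℝ) = 8^2 by norm_num, Real.sqrt_sq (by norm_num)]]
    exact Real.sqrt_le_sqrt hnR
  have hsq : Real.sqrt n ^ 2 = (n:ℝ) := Real.sq_sqrt hnp.le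
  have hmhalf : (mn:ℝ) ≤ (n:ℝ)/2 := by
    have h4 : (1-2*εn)*Real.logb 2 n ≤ Real.logb 2 n := by
      have h5 : 0 ≤ Real.logb 2 n := le_of_lt (Real.logb_pos (by norm_num) (by linarith))
      nlinarith
    have h6 : (mn:ℝ) < 3*Real.sqrt n + 1 := by linarith
    nlinarith [Real.sqrt_nonneg (n:ℝ)]
  have hm2 : 2*mn ≤ n := by
    have : (2*mn:ℝ) ≤ (n:ℝ) := by push_cast; linarith
    exact_mod_cast this
  -- t^2 = ω^2 * n^(2-2ε)
  have hAA : (n:ℝ)^(2-2*εn) = A*A := by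
    rw [hA, show (2-2*εn) = (1-εn)+(1-εn) by ring, Real.rpow_add hnp]
  have ht2 : (tn:ℝ)^2 = ωn^2*(n:ℝ)^(2-2*εn) := by
    rw [htn, hAA]; ring
  have hlow : ωn^2*(n:ℝ) ≤ (tn:ℝ)^2 := by
    rw [ht2]
    have h8 : (n:ℝ)^(1:ℝ) ≤ (n:ℝ)^(2-2*εn) :=
      Real.rpow_le_rpow_of_exponent_le hn1 (by linarith)
    calc ωn^2*(n:ℝ) = ωn^2*(n:ℝ)^(1:ℝ) := by rw [Real.rpow_one]
      _ ≤ ωn^2*(n:ℝ)^(2-2*εn) := mul_le_mul_of_nonneg_left h8 (sq_nonneg ωn)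
  -- E6
  have hE6 : (2:ℝ)^(mn-1) + 1 ≤ (tn:ℝ)^2/(32*(n:ℝ)) := by
    set B : ℝ := (n:ℝ)^(1-2*εn) with hB
    have hB1 : 1 ≤ B := by
      rw [hB]
      calc (1:ℝ) = (n:ℝ)^(0:ℝ) := by rw [Real.rpow_zero]
        _ ≤ (n:ℝ)^(1-2*εn) := Real.rpow_le_rpow_of_exponent_le hn1 (by linarith)
    have hstepa : (2:ℝ)^(mn-1) ≤ B := by
      have hc1 : ((mn-1:ℕ):ℝ) ≤ (1-2*εn)*Real.logb 2 n := by
        have : ((mn-1:ℕ):ℝ) = (mn:ℝ) - 1 := by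
          rw [Nat.cast_sub hm1, Nat.cast_one]
        rw [this]; linarith
      calc (2:ℝ)^(mn-1) = (2:ℝ)^(((mn-1:ℕ)):ℝ) := (Real.rpow_natCast 2 (mn-1)).symm
        _ ≤ (2:ℝ)^((1-2*εn)*Real.logb 2 n) :=
            Real.rpow_le_rpow_of_exponent_le (by norm_num) hc1
        _ = ((2:ℝ)^(Real.logb 2 n))^(1-2*εn) := by
            rw [← Real.rpow_mul (by norm_num : (0:ℝ) ≤ 2), mul_comm]
        _ = B := by rw [Real.rpow_logb (by norm_num) (by norm_num) hnp, hB]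
    have hstepb : (tn:ℝ)^2/(32*(n:ℝ)) = ωn^2*B/32 := by
      have h9 : (n:ℝ)^(2-2*εn) = B*(n:ℝ) := by
        rw [hB, show (2-2*εn) = (1-2*εn)+1 by ring, Real.rpow_add hnp, Real.rpow_one]
      rw [ht2, h9]
      field_simp
    rw [hstepb]
    have hω2 : (64:ℝ) ≤ ωn^2 := by nlinarith
    have h10 : 64*B ≤ ωn^2*B := mul_le_mul_of_nonneg_right hω2 (by linarith)
    linarith [hstepa, hB1, h10]
  exact ⟨ht4, hm1, hm2, hE6, hlow⟩


/-- Let `ε = ε(n)` with `0 ≤ ε < 1/2`, let `ω(n) → ∞`, and set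
`t = ω(n)·n^{1−ε}` with `t = o(n)` and `m = ⌈(1−2ε)·log₂ n⌉`.  Then the probability that a
uniformly random configuration of `t` pebbles on `F_{m,n}` is solvable tends to `1`. -/
theorem stmt15 (ε : ℕ → ℝ) (hε : ∀ n, 0 ≤ ε n ∧ ε n < 1 / 2)
    (ω : ℕ → ℝ) (hω : Tendsto ω atTop atTop)
    (t : ℕ → ℕ) (ht : ∀ n, (t n : ℝ) = ω n * (n : ℝ) ^ (1 - ε n))
    (hto : (fun n => (t n : ℝ)) =o[atTop] (fun n => (n : ℝ)))
    (m : ℕ → ℕ) (hm : ∀ n, m n = ⌈(1 - 2 * ε n) * Real.logb 2 n⌉₊) :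
    Tendsto (fun n =>
      (Nat.card {C : Sym (Fin n) (t n) // ∀ r : Fin n,
          ∃ C', Relation.ReflTransGen (PebStep (fuse n (m n)))
            (fun v => Multiset.count v (C : Multiset (Fin n))) C' ∧ 1 ≤ C' r} : ℝ)
        / ((n + t n - 1).choose (t n) : ℝ)) atTop (nhds 1) := by
  classical
  have hω8 : ∀ᶠ n in atTop, 8 ≤ ω n := hω.eventually_ge_atTop 8
  have htle : ∀ᶠ n in atTop, t n ≤ n := by
    filter_upwards [hto.def one_pos] with n hn
    rw [Real.norm_eq_abs, Real.norm_eq_abs, abs_of_nonneg (Nat.cast_nonneg _),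
      abs_of_nonneg (Nat.cast_nonneg _), one_mul] at hn
    exact_mod_cast hn
  have h64 : ∀ᶠ n in atTop, 64 ≤ n := eventually_ge_atTop 64
  set bnd : ℕ → ℝ := fun n => 64/(ω n)^2 + 64/(n:ℝ) with hbnd
  have hω2 : Tendsto (fun n => (ω n)^2) atTop atTop := by
    have h2 : (fun n => ω n * ω n) = fun n => (ω n)^2 := by funext n; ring
    rw [← h2]
    exact hω.atTop_mul_atTop₀ hω
  have hbnd0 : Tendsto bnd atTop (nhds 0) := by
    have hb1 : Tendsto (fun n => 64/(ω n)^2) atTop (nhds 0) :=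
      tendsto_const_nhds.div_atTop hω2
    have hb2 := tendsto_const_div_atTop_nhds_zero_nat (64:ℝ)
    have := hb1.add hb2
    simpa using this
  have h1b : Tendsto (fun n => 1 - bnd n) atTop (nhds 1) := by
    have := hbnd0.const_sub (1:ℝ)
    simpa using this
  refine tendsto_of_tendsto_of_tendsto_of_le_of_le' h1b tendsto_const_nhds ?_ ?_
  · -- lower bound
    filter_upwards [h64, hω8, htle] with n h64n hω8n htlen
    obtain ⟨ht4, hm1, hm2, hE6, hlow⟩ := eventual_facts n (t n) (m n) (ε n) (ω n)
      (hε n).1 (hε n).2 hω8n (ht n) (hm n) h64n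
    have hcore := core n (t n) (m n) h64n ht4 htlen hm1 hm2 hE6
    set solv : Sym (Fin n) (t n) → Prop := fun C => ∀ r : Fin n,
      ∃ C', Relation.ReflTransGen (PebStep (fuse n (m n)))
        (fun v => Multiset.count v (C : Multiset (Fin n))) C' ∧ 1 ≤ C' r with hsolv
    set D : ℕ := (n + t n - 1).choose (t n) with hD
    have hDpos : 0 < D := by rw [hD]; exact Nat.choose_pos (by omega)
    set Bad : ℕ := (Finset.univ.filter
      fun C : Sym (Fin n) (t n) => Kf n (t n) (m n) C < 2^(m n - 1)+1).card with hBadd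
    have hcardU : (Finset.univ : Finset (Sym (Fin n) (t n))).card = D := by
      rw [Finset.card_univ, card_sym_all, hD]
    have hsplit := Finset.card_filter_add_card_filter_not
      (s := (Finset.univ : Finset (Sym (Fin n) (t n))))
      (p := fun C => Kf n (t n) (m n) C < 2^(m n - 1)+1)
    have hmono : (Finset.univ.filter
        fun C : Sym (Fin n) (t n) => ¬(Kf n (t n) (m n) C < 2^(m n - 1)+1))
        ⊆ Finset.univ.filter solv := by
      intro C hC
      rw [Finset.mem_filter] at hC ⊢
      refine ⟨Finset.mem_univ _, ?_⟩
      have hK : 2^(m n - 1) + 1 ≤ Kf n (t n) (m n) C := by omega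
      exact solvable_of_heavy n (m n) hm1 (by omega)
        (fun v => Multiset.count v (C : Multiset (Fin n))) hK
    have hcard2 : D ≤ (Finset.univ.filter solv).card + Bad := by
      have h3 := Finset.card_le_card hmono
      omega
    have hNatcard : (Nat.card {C : Sym (Fin n) (t n) // solv C})
        = (Finset.univ.filter solv).card := by
      rw [Nat.card_eq_fintype_card, Fintype.card_subtype]
    -- real arithmetic
    have hDp : (0:ℝ) < (D:ℝ) := by exact_mod_cast hDpos
    have htRp : (0:ℝ) < (t n : ℝ) := by
      have : (0:ℕ) < t n := by omega
      exact_mod_cast this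
    have hnRp : (0:ℝ) < (n:ℝ) := by
      have : (0:ℕ) < n := by omega
      exact_mod_cast this
    have htp : (0:ℝ) < (t n:ℝ)^2*(n:ℝ) := by positivity
    have hωp : (0:ℝ) < (ω n)^2 := by nlinarith
    have hBadle : (Bad:ℝ) ≤ bnd n * D := by
      have hb1 : (Bad:ℝ) ≤ (D:ℝ)*(64*(n:ℝ)^2+64*(t n:ℝ)^2)/((t n:ℝ)^2*(n:ℝ)) := by
        rw [le_div_iff₀ htp]
        exact hcore
      have hs2 : (D:ℝ)*(64*(n:ℝ)^2+64*(t n:ℝ)^2)/((t n:ℝ)^2*(n:ℝ))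
          = (64*(n:ℝ)/(t n:ℝ)^2 + 64/(n:ℝ))*D := by
        field_simp
      have hs3 : 64*(n:ℝ)/(t n:ℝ)^2 ≤ 64/(ω n)^2 := by
        rw [div_le_div_iff₀ (by positivity) hωp]
        nlinarith [hlow]
      have hs4 : (64*(n:ℝ)/(t n:ℝ)^2 + 64/(n:ℝ))*D ≤ bnd n * D := by
        apply mul_le_mul_of_nonneg_right _ hDp.le
        rw [hbnd]
        dsimp only
        linarith [hs3]
      calc (Bad:ℝ) ≤ (D:ℝ)*(64*(n:ℝ)^2+64*(t n:ℝ)^2)/((t n:ℝ)^2*(n:ℝ)) := hb1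
        _ = (64*(n:ℝ)/(t n:ℝ)^2 + 64/(n:ℝ))*D := hs2
        _ ≤ bnd n * D := hs4
    rw [hNatcard]
    rw [le_div_iff₀ hDp]
    have hc2R : (D:ℝ) ≤ ((Finset.univ.filter solv).card : ℝ) + (Bad:ℝ) := by
      exact_mod_cast hcard2
    linarith
  · -- upper bound
    filter_upwards [h64] with n h64n
    have hDpos : (0:ℝ) < ((n + t n - 1).choose (t n) : ℝ) := by
      have : 0 < (n + t n - 1).choose (t n) := Nat.choose_pos (by omega)
      exact_mod_cast this
    rw [div_le_one hDpos]
    have h1 : Nat.card {C : Sym (Fin n) (t n) // ∀ r : Fin n,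
        ∃ C', Relation.ReflTransGen (PebStep (fuse n (m n)))
          (fun v => Multiset.count v (C : Multiset (Fin n))) C' ∧ 1 ≤ C' r}
        ≤ Fintype.card (Sym (Fin n) (t n)) := by
      rw [Nat.card_eq_fintype_card]
      exact Fintype.card_subtype_le _
    rw [card_sym_all] at h1
    exact_mod_cast h1
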